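/- For any maximal clique {a^1 >_lex ⋯ >_lex a^n} of the sorting graph 𝒢(d,α), one has Δ(a^i, a^j) has length j − i for all 1 ≤ i < j ≤ n, and Δ(a^1, a^n) = [1,n); in particular a^n_1 = a^1_1 − 1, a^n_n = a^1_n + 1, and a^n_i = a^1_i for 2 ≤ i ≤ n−1. -/
import Mathlib


/-- The set `V_{n,d}^α` of nonnegative integer tuples with coordinate sum `d`
and coordinatewise bound `α`. -/
def VT (n d : ℕ) (α : Fin n → ℕ) : Set (Fin n → ℕ) :=
  {c | (∑ i, c i) = d ∧ ∀ i, c i ≤ α i}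

/-- `a >_lex b`: the leftmost nonzero entry of `a - b` is positive. -/
def lexGT {n : ℕ} (a b : Fin n → ℕ) : Prop :=
  ∃ i : Fin n, (∀ j, j < i → a j = b j) ∧ b i < a i

/-- `sort(a,b) = (a,b)` for Sturmfels' sorting operator: for every `t`, the prefix
sum of `a` up to `t` equals the ceiling of half the prefix sum of `a + b`. -/
def sortedPair {n : ℕ} (a b : Fin n → ℕ) : Prop :=
  ∀ t : Fin n, 2 * (∑ i ∈ Finset.Iic t, a i)
    = (∑ i ∈ Finset.Iic t, (a i + b i)) + (∑ i ∈ Finset.Iic t, (a i + b i)) % 2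

/-- The sorting signature set `Δ(a,b)` of a sorted pair, recorded (0-indexed) as the
set of positions `t` where the prefix sum of `b` is one less than that of `a`. -/
def sigSet {n : ℕ} (a b : Fin n → ℕ) : Finset (Fin n) :=
  Finset.univ.filter (fun t => (∑ i ∈ Finset.Iic t, b i) + 1 = ∑ i ∈ Finset.Iic t, a i)

/-- Adjacency in the sorting graph `𝒢(d,α)`. -/
def adjG {n : ℕ} (a b : Fin n → ℕ) : Prop :=
  (lexGT a b ∧ sortedPair a b) ∨ (lexGT b a ∧ sortedPair b a)

/-- A clique of the sorting graph `𝒢(d,α)`. -/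
def isClique (n d : ℕ) (α : Fin n → ℕ) (S : Finset (Fin n → ℕ)) : Prop :=
  (↑S ⊆ VT n d α) ∧ ∀ a ∈ S, ∀ b ∈ S, a ≠ b → adjG a b

/-- A maximal clique of the sorting graph `𝒢(d,α)`. -/
def isMaxClique (n d : ℕ) (α : Fin n → ℕ) (S : Finset (Fin n → ℕ)) : Prop :=
  isClique n d α S ∧ ∀ T, isClique n d α T → S ⊆ T → S = T

/-- For any maximal clique `a^1 >_lex ⋯ >_lex a^n` of `𝒢(d,α)`:
`Δ(a^i,a^j)` has length `j - i` for `i < j`, `Δ(a^1,a^n) = [1,n)`, and in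
particular `a^n_1 = a^1_1 - 1`, `a^n_n = a^1_n + 1`, `a^n_i = a^1_i` otherwise. -/
theorem stmt7 (n d : ℕ) (hn : 3 ≤ n) (α : Fin n → ℕ)
    (hα0 : 1 ≤ α ⟨0, by omega⟩) (hmono : Monotone α)
    (hαd : ∀ i, α i ≤ d) (hdα : d < ∑ i, α i)
    (hcard : ∀ S : Finset (Fin n → ℕ), isMaxClique n d α S → S.card = n)
    (A : Fin n → (Fin n → ℕ))
    (hdec : ∀ i j : Fin n, i < j → lexGT (A i) (A j))
    (hmax : isMaxClique n d α (Finset.image A Finset.univ)) :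
    (∀ i j : Fin n, i < j → (sigSet (A i) (A j)).card = j.1 - i.1) ∧
    sigSet (A ⟨0, by omega⟩) (A ⟨n - 1, by omega⟩)
      = Finset.univ.filter (fun t : Fin n => t.1 + 1 < n) ∧
    A ⟨n - 1, by omega⟩ ⟨0, by omega⟩ + 1 = A ⟨0, by omega⟩ ⟨0, by omega⟩ ∧
    A ⟨n - 1, by omega⟩ ⟨n - 1, by omega⟩ = A ⟨0, by omega⟩ ⟨n - 1, by omega⟩ + 1 ∧
    ∀ i : Fin n, 0 < i.1 → i.1 < n - 1 →
      A ⟨n - 1, by omega⟩ i = A ⟨0, by omega⟩ i := by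
  
  classical
  obtain ⟨⟨hVT, hadj⟩, -⟩ := hmax
  have hZlt : 0 < n := by omega
  have hLlt : n - 1 < n := by omega
  -- total sums
  have hIicL : Finset.Iic (⟨n - 1, hLlt⟩ : Fin n) = Finset.univ := by
    ext t
    have := t.isLt
    simp [Fin.le_def]
    omega
  have hsum : ∀ i : Fin n, ∑ k ∈ Finset.Iic (⟨n - 1, hLlt⟩ : Fin n), A i k = d := by
    intro i
    have hm : A i ∈ VT n d α :=
      hVT (Finset.mem_coe.mpr (Finset.mem_image_of_mem A (Finset.mem_univ i)))
    rw [hIicL]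
    exact hm.1
  have hasym : ∀ a b : Fin n → ℕ, lexGT a b → ¬ lexGT b a := by
    rintro a b ⟨i, hi, hib⟩ ⟨j, hj, hja⟩
    rcases lt_trichotomy i j with h | h | h
    · have := hj i h; omega
    · subst h; omega
    · have := hi j h; omega
  have hsp : ∀ i j : Fin n, i < j → sortedPair (A i) (A j) := by
    intro i j hij
    have hne : A i ≠ A j := by
      obtain ⟨m, -, hm⟩ := hdec i j hij
      intro he; rw [he] at hm; omega
    have hmemi : A i ∈ Finset.image A Finset.univ :=
      Finset.mem_image_of_mem A (Finset.mem_univ i)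
    have hmemj : A j ∈ Finset.image A Finset.univ :=
      Finset.mem_image_of_mem A (Finset.mem_univ j)
    rcases hadj (A i) hmemi (A j) hmemj hne with ⟨-, h⟩ | ⟨h1, -⟩
    · exact h
    · exact absurd h1 (hasym _ _ (hdec i j hij))
  have hbound : ∀ i j : Fin n, i ≤ j → ∀ t : Fin n,
      (∑ k ∈ Finset.Iic t, A j k ≤ ∑ k ∈ Finset.Iic t, A i k) ∧
      (∑ k ∈ Finset.Iic t, A i k ≤ ∑ k ∈ Finset.Iic t, A j k + 1) := by
    intro i j hij t
    rcases eq_or_lt_of_le hij with h | h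
    · subst h; omega
    · have h2 := hsp i j h t
      rw [Finset.sum_add_distrib] at h2
      omega
  have hcardadd : ∀ i j k : Fin n, i ≤ j → j ≤ k →
      (sigSet (A i) (A k)).card
        = (sigSet (A i) (A j)).card + (sigSet (A j) (A k)).card := by
    intro i j k hij hjk
    have hdisj : Disjoint (sigSet (A i) (A j)) (sigSet (A j) (A k)) := by
      rw [Finset.disjoint_left]
      intro t h1 h2
      simp only [sigSet, Finset.mem_filter, Finset.mem_univ, true_and] at h1 h2
      have b1 := hbound i j hij t
      have b2 := hbound j k hjk t
      have b3 := hbound i k (le_trans hij hjk) t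
      omega
    rw [← Finset.card_union_of_disjoint hdisj]
    congr 1
    ext t
    simp only [sigSet, Finset.mem_union, Finset.mem_filter, Finset.mem_univ, true_and]
    have b1 := hbound i j hij t
    have b2 := hbound j k hjk t
    have b3 := hbound i k (le_trans hij hjk) t
    omega
  have hone : ∀ i j : Fin n, i < j → 1 ≤ (sigSet (A i) (A j)).card := by
    intro i j hij
    obtain ⟨m, hpre, hm⟩ := hdec i j hij
    have hnot : m ∉ Finset.Iio m := by simp
    have hins : Finset.Iic m = insert m (Finset.Iio m) := by
      ext t
      simp only [Finset.mem_Iic, Finset.mem_insert, Finset.mem_Iio, Fin.le_def, Fin.lt_def,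
        Fin.ext_iff]
      omega
    have hEq : ∑ k ∈ Finset.Iio m, A i k = ∑ k ∈ Finset.Iio m, A j k := by
      refine Finset.sum_congr rfl ?_
      intro t ht
      exact hpre t (Finset.mem_Iio.mp ht)
    have hlt : ∑ k ∈ Finset.Iic m, A j k < ∑ k ∈ Finset.Iic m, A i k := by
      rw [hins, Finset.sum_insert hnot, Finset.sum_insert hnot, hEq]
      omega
    have hb := hbound i j (le_of_lt hij) m
    have hmm : m ∈ sigSet (A i) (A j) := by
      simp only [sigSet, Finset.mem_filter, Finset.mem_univ, true_and]
      omega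
    exact Finset.card_pos.mpr ⟨m, hmm⟩
  have hlow : ∀ (c : ℕ) (i j : Fin n), i ≤ j → j.1 = i.1 + c →
      c ≤ (sigSet (A i) (A j)).card := by
    intro c
    induction c with
    | zero => intro i j _ _; exact Nat.zero_le _
    | succ c ih =>
      intro i j hij hj
      have hj' : i.1 + c < n := by have := j.isLt; omega
      have h1 : i ≤ (⟨i.1 + c, hj'⟩ : Fin n) := by
        simp [Fin.le_def]
      have h2 : (⟨i.1 + c, hj'⟩ : Fin n) ≤ j := by
        simp [Fin.le_def]; omega
      have h3 : (⟨i.1 + c, hj'⟩ : Fin n) < j := by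
        simp [Fin.lt_def]; omega
      have e := hcardadd i ⟨i.1 + c, hj'⟩ j h1 h2
      have l1 := ih i ⟨i.1 + c, hj'⟩ h1 rfl
      have l2 := hone ⟨i.1 + c, hj'⟩ j h3
      omega
  have hFcard : (Finset.univ.filter (fun t : Fin n => t.1 + 1 < n)).card = n - 1 := by
    have hF : Finset.univ.filter (fun t : Fin n => t.1 + 1 < n)
        = Finset.univ.erase (⟨n - 1, hLlt⟩ : Fin n) := by
      ext t
      have := t.isLt
      simp [Finset.mem_erase, Fin.ext_iff]
      omega
    rw [hF, Finset.card_erase_of_mem (Finset.mem_univ _)]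
    simp
  have hZL : sigSet (A ⟨0, hZlt⟩) (A ⟨n - 1, hLlt⟩)
      = Finset.univ.filter (fun t : Fin n => t.1 + 1 < n) := by
    have hsub : sigSet (A ⟨0, hZlt⟩) (A ⟨n - 1, hLlt⟩)
        ⊆ Finset.univ.filter (fun t : Fin n => t.1 + 1 < n) := by
      intro t ht
      simp only [sigSet, Finset.mem_filter, Finset.mem_univ, true_and] at ht ⊢
      by_contra h
      have htL : t = (⟨n - 1, hLlt⟩ : Fin n) := by
        have := t.isLt
        apply Fin.ext
        show t.1 = n - 1
        omega
      rw [htL, hsum, hsum] at ht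
      omega
    have hge : n - 1 ≤ (sigSet (A ⟨0, hZlt⟩) (A ⟨n - 1, hLlt⟩)).card :=
      hlow (n - 1) ⟨0, hZlt⟩ ⟨n - 1, hLlt⟩ (by simp [Fin.le_def]) (by simp)
    exact Finset.eq_of_subset_of_card_le hsub (by rw [hFcard]; exact hge)
  have hcardeq : ∀ i j : Fin n, i < j → (sigSet (A i) (A j)).card = j.1 - i.1 := by
    intro i j hij
    have hij' : i.1 < j.1 := hij
    have hjn := j.isLt
    have hiL : i ≤ (⟨n - 1, hLlt⟩ : Fin n) := by
      simp [Fin.le_def]; have := i.isLt; omega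
    have hjL : j ≤ (⟨n - 1, hLlt⟩ : Fin n) := by
      simp [Fin.le_def]; omega
    have hZi : (⟨0, hZlt⟩ : Fin n) ≤ i := by simp [Fin.le_def]
    have e1 := hcardadd ⟨0, hZlt⟩ i ⟨n - 1, hLlt⟩ hZi hiL
    have e2 := hcardadd i j ⟨n - 1, hLlt⟩ (le_of_lt hij) hjL
    have l1 := hlow i.1 ⟨0, hZlt⟩ i hZi (by simp)
    have l2 := hlow (j.1 - i.1) i j (le_of_lt hij) (by omega)
    have l3 := hlow (n - 1 - j.1) j ⟨n - 1, hLlt⟩ hjL (by simp; omega)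
    have etot : (sigSet (A ⟨0, hZlt⟩) (A ⟨n - 1, hLlt⟩)).card = n - 1 := by
      rw [hZL, hFcard]
    omega
  have hmemF : ∀ t : Fin n, t.1 + 1 < n →
      (∑ k ∈ Finset.Iic t, A ⟨n - 1, hLlt⟩ k) + 1 = ∑ k ∈ Finset.Iic t, A ⟨0, hZlt⟩ k := by
    intro t ht
    have hmt : t ∈ sigSet (A ⟨0, hZlt⟩) (A ⟨n - 1, hLlt⟩) := by
      rw [hZL]; simp [ht]
    simpa [sigSet] using hmt
  have hstep : ∀ (x : Fin n → ℕ) (i : Fin n) (h : 0 < i.1),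
      ∑ k ∈ Finset.Iic i, x k
        = ∑ k ∈ Finset.Iic (⟨i.1 - 1, Nat.lt_of_le_of_lt (Nat.sub_le _ _) i.isLt⟩ : Fin n), x k
            + x i := by
    intro x i h
    have hins : Finset.Iic i
        = insert i (Finset.Iic (⟨i.1 - 1, Nat.lt_of_le_of_lt (Nat.sub_le _ _) i.isLt⟩ : Fin n)) := by
      ext t
      simp only [Finset.mem_Iic, Finset.mem_insert, Fin.le_def, Fin.ext_iff]
      omega
    rw [hins, Finset.sum_insert (by simp only [Finset.mem_Iic, Fin.le_def]; omega)]
    exact Nat.add_comm _ _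
  have hIicZ : Finset.Iic (⟨0, hZlt⟩ : Fin n) = {(⟨0, hZlt⟩ : Fin n)} := by
    ext t
    simp [Fin.le_def, Fin.ext_iff]
  have h3 : A ⟨n - 1, hLlt⟩ ⟨0, hZlt⟩ + 1 = A ⟨0, hZlt⟩ ⟨0, hZlt⟩ := by
    have hm := hmemF ⟨0, hZlt⟩ (by show 0 + 1 < n; omega)
    rwa [hIicZ, Finset.sum_singleton, Finset.sum_singleton] at hm
  have hL1 : n - 1 - 1 < n := by omega
  have h4 : A ⟨n - 1, hLlt⟩ ⟨n - 1, hLlt⟩ = A ⟨0, hZlt⟩ ⟨n - 1, hLlt⟩ + 1 := by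
    have hm := hmemF ⟨n - 1 - 1, hL1⟩ (by show n - 1 - 1 + 1 < n; omega)
    have e1 : ∑ k ∈ Finset.Iic (⟨n - 1, hLlt⟩ : Fin n), A ⟨n - 1, hLlt⟩ k
        = ∑ k ∈ Finset.Iic (⟨n - 1 - 1, hL1⟩ : Fin n), A ⟨n - 1, hLlt⟩ k
            + A ⟨n - 1, hLlt⟩ ⟨n - 1, hLlt⟩ :=
      hstep _ _ (by show 0 < n - 1; omega)
    have e2 : ∑ k ∈ Finset.Iic (⟨n - 1, hLlt⟩ : Fin n), A ⟨0, hZlt⟩ k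
        = ∑ k ∈ Finset.Iic (⟨n - 1 - 1, hL1⟩ : Fin n), A ⟨0, hZlt⟩ k
            + A ⟨0, hZlt⟩ ⟨n - 1, hLlt⟩ :=
      hstep _ _ (by show 0 < n - 1; omega)
    have s1 := hsum ⟨n - 1, hLlt⟩
    have s2 := hsum ⟨0, hZlt⟩
    omega
  have h5 : ∀ i : Fin n, 0 < i.1 → i.1 < n - 1 →
      A ⟨n - 1, hLlt⟩ i = A ⟨0, hZlt⟩ i := by
    intro i h0 h1
    have hi1 : i.1 - 1 < n := Nat.lt_of_le_of_lt (Nat.sub_le _ _) i.isLt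
    have hm1 := hmemF i (by omega)
    have hm2 := hmemF ⟨i.1 - 1, hi1⟩ (by show i.1 - 1 + 1 < n; omega)
    have e1 : ∑ k ∈ Finset.Iic i, A ⟨n - 1, hLlt⟩ k
        = ∑ k ∈ Finset.Iic (⟨i.1 - 1, hi1⟩ : Fin n), A ⟨n - 1, hLlt⟩ k
            + A ⟨n - 1, hLlt⟩ i := hstep _ _ h0
    have e2 : ∑ k ∈ Finset.Iic i, A ⟨0, hZlt⟩ k
        = ∑ k ∈ Finset.Iic (⟨i.1 - 1, hi1⟩ : Fin n), A ⟨0, hZlt⟩ k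
            + A ⟨0, hZlt⟩ i := hstep _ _ h0
    omega
  exact ⟨hcardeq, hZL, h3, h4, h5⟩
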